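/- arXiv:math/9911177 — 2 statements merged into one kernel-verified Lean document; each statement's English description precedes it below -/
import Mathlib

section
/- Let H be a Hilbert space, D a self-adjoint (possibly unbounded) operator on H such that 0 is an isolated point of the spectrum of D, and P the orthogonal projection onto the kernel of D. If A is a bounded operator on H such that the commutator [D, A] extends to a compact operator K with A(dom D) ⊆ dom D, and (λ - D)⁻¹ K (λ - D)⁻¹ is compact for all λ in the resolvent set, then the commutator [P, A] is a compact operator. -/
open Module ContinuousLinearMap

/-- The compression `P A P` of a bounded operator `A` to a subspace `K`
(with orthogonal projection), regarded as an operator on `K`. -/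
noncomputable def compress {H : Type*} [NormedAddCommGroup H] [InnerProductSpace ℂ H]
    (K : Submodule ℂ H) [K.HasOrthogonalProjection] (A : H →L[ℂ] H) : K →L[ℂ] K :=
  K.orthogonalProjectionOnto ∘L (A ∘L K.subtypeL)

/-- The orthogonal projection onto `K`, as an operator on the ambient space. -/
noncomputable def orthProj {H : Type*} [NormedAddCommGroup H] [InnerProductSpace ℂ H]
    (K : Submodule ℂ H) [K.HasOrthogonalProjection] : H →L[ℂ] H :=
  K.subtypeL ∘L K.orthogonalProjectionOnto

/-- A bounded operator is Fredholm if its kernel and cokernel are finite dimensional. -/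
def IsFredholm {E F : Type*} [NormedAddCommGroup E] [NormedAddCommGroup F]
    [NormedSpace ℂ E] [NormedSpace ℂ F] (T : E →L[ℂ] F) : Prop :=
  FiniteDimensional ℂ (LinearMap.ker (T : E →ₗ[ℂ] F)) ∧ FiniteDimensional ℂ (F ⧸ LinearMap.range (T : E →ₗ[ℂ] F))

/-- The Fredholm index `dim ker − dim coker`. -/
noncomputable def fredholmIndex {E F : Type*} [NormedAddCommGroup E] [NormedAddCommGroup F]
    [NormedSpace ℂ E] [NormedSpace ℂ F] (T : E →L[ℂ] F) : ℤ :=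
  (finrank ℂ (LinearMap.ker (T : E →ₗ[ℂ] F)) : ℤ) - (finrank ℂ (F ⧸ LinearMap.range (T : E →ₗ[ℂ] F)) : ℤ)

section AuxiliaryLemmas

open ContinuousMap in
lemma sw_mem_of_closed {σ : Set ℝ} [CompactSpace σ] (S : Set C(σ, ℝ)) (hS : IsClosed S)
    (halg : ∀ r : ℝ, algebraMap ℝ C(σ, ℝ) r ∈ S)
    (hadd : ∀ f ∈ S, ∀ g ∈ S, f + g ∈ S)
    (hmul : ∀ f ∈ S, ∀ g ∈ S, f * g ∈ S)
    (hX : restrict σ (ContinuousMap.id ℝ) ∈ S) (f : C(σ, ℝ)) : f ∈ S := by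
  have hpoly : (polynomialFunctions σ : Set C(σ, ℝ)) ⊆ S := by
    intro g hg
    rw [SetLike.mem_coe, polynomialFunctions.eq_adjoin_X] at hg
    induction hg using Algebra.adjoin_induction with
    | mem x hx =>
        rw [Set.mem_singleton_iff] at hx; subst hx
        rw [Polynomial.toContinuousMapOnAlgHom_apply,
          Polynomial.toContinuousMapOn_X_eq_restrict_id]
        exact hX
    | algebraMap r => exact halg r
    | add x y _ _ hx hy => exact hadd _ hx _ hy
    | mul x y _ _ hx hy => exact hmul _ hx _ hy
  have h2 : f ∈ closure (polynomialFunctions σ : Set C(σ, ℝ)) := by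
    have h3 := polynomialFunctions.topologicalClosure σ
    have : f ∈ (polynomialFunctions σ).topologicalClosure := by rw [h3]; trivial
    exact this
  exact closure_minimal hpoly hS h2

variable {H : Type*} [NormedAddCommGroup H] [InnerProductSpace ℂ H] [CompleteSpace H]

lemma cfcHom_apply_eigenvector {T : H →L[ℂ] H} (hT : IsSelfAdjoint T) {μ : ℝ}
    (hμ : μ ∈ spectrum ℝ T) {x : H} (hx : T x = (μ : ℂ) • x) (f : C(spectrum ℝ T, ℝ)) :
    cfcHom hT f x = ((f ⟨μ, hμ⟩ : ℝ) : ℂ) • x := by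
  refine sw_mem_of_closed (S := {g : C(spectrum ℝ T, ℝ) |
      cfcHom hT g x = ((g ⟨μ, hμ⟩ : ℝ) : ℂ) • x}) ?_ ?_ ?_ ?_ ?_ f
  · have hcont1 : Continuous fun g : C(spectrum ℝ T, ℝ) => cfcHom hT g x :=
      ((ContinuousLinearMap.apply ℂ H x).continuous).comp
        (cfcHom_isClosedEmbedding hT).continuous
    have hcont2 : Continuous fun g : C(spectrum ℝ T, ℝ) => ((g ⟨μ, hμ⟩ : ℝ) : ℂ) • x := by
      fun_prop
    exact isClosed_eq hcont1 hcont2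
  · intro r
    simp only [Set.mem_setOf_eq, AlgHomClass.commutes]
    simp [Algebra.algebraMap_eq_smul_one, Complex.real_smul]
  · rintro g hg h hh
    simp only [Set.mem_setOf_eq, map_add] at *
    rw [ContinuousLinearMap.add_apply, hg, hh, ContinuousMap.add_apply]
    push_cast
    rw [add_smul]
  · rintro g hg h hh
    simp only [Set.mem_setOf_eq, map_mul] at *
    rw [ContinuousLinearMap.mul_apply, hh, map_smul, hg, ContinuousMap.mul_apply]
    push_cast
    rw [smul_smul, mul_comm]
  · simp only [Set.mem_setOf_eq, cfcHom_id hT, ContinuousMap.restrict_apply,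
      ContinuousMap.id_apply, hx]

lemma isCompactOperator_commutator_cfcHom {T A : H →L[ℂ] H} (hT : IsSelfAdjoint T)
    (hTA : IsCompactOperator ⇑(T * A - A * T)) (f : C(spectrum ℝ T, ℝ)) :
    IsCompactOperator ⇑(cfcHom hT f * A - A * cfcHom hT f) := by
  refine sw_mem_of_closed (S := {g : C(spectrum ℝ T, ℝ) |
      IsCompactOperator ⇑(cfcHom hT g * A - A * cfcHom hT g)}) ?_ ?_ ?_ ?_ ?_ f
  · have hcont : Continuous fun g : C(spectrum ℝ T, ℝ) =>
        cfcHom hT g * A - A * cfcHom hT g := by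
      have h1 := (cfcHom_isClosedEmbedding (R := ℝ) hT).continuous
      fun_prop
    exact (isClosed_setOf_isCompactOperator (𝕜₁ := ℂ) (𝕜₂ := ℂ)).preimage hcont
  · intro r
    have : algebraMap ℝ (H →L[ℂ] H) r * A - A * algebraMap ℝ (H →L[ℂ] H) r = 0 := by
      rw [Algebra.algebraMap_eq_smul_one]
      simp [smul_mul_assoc, mul_smul_comm]
    rw [Set.mem_setOf_eq, AlgHomClass.commutes, this, ContinuousLinearMap.coe_zero']
    exact isCompactOperator_zero
  · rintro g hg h hh
    simp only [Set.mem_setOf_eq, map_add] at *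
    have : (cfcHom hT g + cfcHom hT h) * A - A * (cfcHom hT g + cfcHom hT h) =
        (cfcHom hT g * A - A * cfcHom hT g) + (cfcHom hT h * A - A * cfcHom hT h) := by noncomm_ring
    rw [this, ContinuousLinearMap.coe_add']
    exact hg.add hh
  · rintro g hg h hh
    simp only [Set.mem_setOf_eq, map_mul] at *
    have : (cfcHom hT g * cfcHom hT h) * A - A * (cfcHom hT g * cfcHom hT h) =
        cfcHom hT g * (cfcHom hT h * A - A * cfcHom hT h) +
          (cfcHom hT g * A - A * cfcHom hT g) * cfcHom hT h := by noncomm_ring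
    rw [this, ContinuousLinearMap.coe_add']
    refine IsCompactOperator.add ?_ ?_
    · rw [ContinuousLinearMap.mul_def, ContinuousLinearMap.coe_comp']
      exact hh.continuous_comp (cfcHom hT g).continuous
    · rw [ContinuousLinearMap.mul_def, ContinuousLinearMap.coe_comp']
      exact hg.comp_clm (cfcHom hT h)
  · simpa only [Set.mem_setOf_eq, cfcHom_id hT] using hTA

end AuxiliaryLemmas

/-- If `D` is self-adjoint with `0` an isolated point of its spectrum, `P` is the
orthogonal projection onto `ker D`, `A` is bounded preserving `dom D` with `[D,A]`
extending to a compact operator `K`, and `(λ−D)⁻¹ K (λ−D)⁻¹` is compact for `λ` in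
the resolvent set, then `[P, A]` is compact. -/
theorem commutator_kernel_projection_compact
    {H : Type*} [NormedAddCommGroup H] [InnerProductSpace ℂ H] [CompleteSpace H]
    (D : H →ₗ.[ℂ] H)
    (hsym : ∀ x y : D.domain, (inner ℂ (D x) (y : H) : ℂ) = inner ℂ (x : H) (D y))
    (ρ : Set ℂ) (R : ℂ → H →L[ℂ] H)
    (hRdom : ∀ (lam : ℂ) (x : H), R lam x ∈ D.domain)
    (hR1 : ∀ lam ∈ ρ, ∀ x : H, lam • R lam x - D ⟨R lam x, hRdom lam x⟩ = x)
    (hR2 : ∀ lam ∈ ρ, ∀ y : D.domain, R lam (lam • (y : H) - D y) = y)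
    (h0 : (0 : ℂ) ∉ ρ)
    (hiso : ∃ ε > (0 : ℝ), ∀ lam : ℂ, lam ≠ 0 → ‖lam‖ < ε → lam ∈ ρ)
    (N : Submodule ℂ H) [CompleteSpace N]
    (hN : ∀ x : H, x ∈ N ↔ ∃ hx : x ∈ D.domain, D ⟨x, hx⟩ = 0)
    (A : H →L[ℂ] H) (hAdom : ∀ x : D.domain, A x ∈ D.domain)
    (K : H →L[ℂ] H) (hKcpt : IsCompactOperator ⇑K)
    (hKcomm : ∀ y : D.domain, K (y : H) = D ⟨A y, hAdom y⟩ - A (D y))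
    (hRKR : ∀ lam ∈ ρ, IsCompactOperator ⇑(R lam ∘L K ∘L R lam)) :
    IsCompactOperator ⇑(orthProj N ∘L A - A ∘L orthProj N) := by
  classical
  obtain ⟨ε, hε, hball⟩ := hiso
  set t : ℝ := ε / 2 with ht_def
  have ht : 0 < t := by positivity
  have htne : (t : ℂ) ≠ 0 := by exact_mod_cast ht.ne'
  have htρ : (t : ℂ) ∈ ρ := by
    refine hball _ htne ?_
    rw [Complex.norm_real, Real.norm_eq_abs, abs_of_pos ht]
    rw [ht_def]; linarith
  set T : H →L[ℂ] H := R t with hT_def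
  -- resolvent identity (pointwise)
  have hres : ∀ lam ∈ ρ, ∀ mu ∈ ρ, ∀ x : H,
      R lam x - R mu x = (mu - lam) • R lam (R mu x) := by
    intro lam hlam mu hmu x
    have hD : D ⟨R mu x, hRdom mu x⟩ = mu • R mu x - x := by
      have h := hR1 mu hmu x
      linear_combination (norm := module) (-1 : ℂ) • h
    have h2 := hR2 lam hlam ⟨R mu x, hRdom mu x⟩
    simp only [hD] at h2
    have h3 : lam • R mu x - (mu • R mu x - x) = ((lam - mu) • R mu x + x) := by
      rw [sub_smul]; abel
    rw [h3, map_add, map_smul] at h2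
    linear_combination (norm := module) h2
  -- symmetry of T
  have hTsym : (T : H →ₗ[ℂ] H).IsSymmetric := by
    intro x y
    simp only [ContinuousLinearMap.coe_coe]
    have hy := hR1 (t : ℂ) htρ y
    have hx := hR1 (t : ℂ) htρ x
    have step1 : (inner ℂ (T x) y : ℂ)
        = inner ℂ (T x) ((t : ℂ) • R (t:ℂ) y - D ⟨R (t:ℂ) y, hRdom _ y⟩) := by
      conv_lhs => rw [← hy]
    rw [step1, inner_sub_right, inner_smul_right, ← hsym ⟨R (t:ℂ) x, hRdom _ x⟩]
    have step2 : (inner ℂ x (T y) : ℂ)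
        = inner ℂ ((t : ℂ) • R (t:ℂ) x - D ⟨R (t:ℂ) x, hRdom _ x⟩) (T y) := by
      conv_lhs => rw [← hx]
    rw [step2, inner_sub_left, inner_smul_left]
    simp [Complex.conj_ofReal]
    rfl
  have hTsa : IsSelfAdjoint T := hTsym.isSelfAdjoint
  -- eigenspace characterization
  have hNT : ∀ x : H, x ∈ N ↔ T x = ((t : ℂ))⁻¹ • x := by
    intro x
    constructor
    · intro hx
      obtain ⟨hdom, hDx⟩ := (hN x).1 hx
      have h2 := hR2 (t : ℂ) htρ ⟨x, hdom⟩
      rw [hDx, sub_zero, map_smul] at h2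
      calc T x = (t : ℂ)⁻¹ • ((t : ℂ) • R (t:ℂ) x) := by
            rw [smul_smul, inv_mul_cancel₀ htne, one_smul]
        _ = ((t : ℂ))⁻¹ • x := by rw [h2]
    · intro hx
      have hxe : x = (t : ℂ) • T x := by
        rw [hx, smul_smul, mul_inv_cancel₀ htne, one_smul]
      have hdom : x ∈ D.domain := by
        rw [hxe]; exact D.domain.smul_mem _ (hRdom _ x)
      refine (hN x).2 ⟨hdom, ?_⟩
      have hDT : D ⟨R (t:ℂ) x, hRdom _ x⟩ = 0 := by
        have h1 := hR1 (t : ℂ) htρ x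
        rw [sub_eq_iff_eq_add] at h1
        nth_rewrite 2 [hxe] at h1
        exact (left_eq_add.mp h1).symm ▸ rfl
      have heq : (⟨x, hdom⟩ : D.domain) = (t : ℂ) • (⟨R (t:ℂ) x, hRdom _ x⟩ : D.domain) := by
        ext; exact hxe
      rw [heq, D.map_smul, hDT, smul_zero]
  -- spectral gap
  set δ : ℝ := min (1 / (2 * t)) (ε / (4 * t * t)) with hδ_def
  have hδ : 0 < δ := by
    apply lt_min <;> positivity
  have hunit : ∀ c : ℝ, c ≠ 1 / t → |c - 1 / t| < δ →
      IsUnit (algebraMap ℝ (H →L[ℂ] H) c - T) := by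
    intro c hc hcδ
    have hδ1 : δ ≤ 1 / (2 * t) := min_le_left _ _
    have hδ2 : δ ≤ ε / (4 * t * t) := min_le_right _ _
    have hδ2' : δ * (4 * t * t) ≤ ε := by
      rw [← le_div_iff₀ (by positivity)]; exact hδ2
    have hclow : 1 / (2 * t) < c := by
      have h1 : 1 / t - c ≤ |c - 1 / t| := by
        rw [abs_sub_comm]; exact le_abs_self _
      have h2 : 1 / t - 1 / (2 * t) = 1 / (2 * t) := by field_simp; ring
      nlinarith [hcδ, hδ1]
    have hc0 : 0 < c := lt_trans (by positivity) hclow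
    set μr : ℝ := t - 1 / c with hμr_def
    have hμrne : μr ≠ 0 := by
      intro h
      apply hc
      have ht' : t = 1 / c := by rw [hμr_def] at h; linarith
      field_simp at ht' ⊢
      linarith
    have hμrbound : |μr| < ε := by
      have hμrval : μr = t * (c - 1 / t) / c := by
        rw [hμr_def]; field_simp
      rw [hμrval, abs_div, abs_mul, abs_of_pos ht, abs_of_pos hc0, div_lt_iff₀ hc0]
      have h5 : t * |c - 1 / t| < t * δ := mul_lt_mul_of_pos_left hcδ ht
      have h6 : 1 / (2 * t) * (2 * t) = 1 := by field_simp
      nlinarith [mul_lt_mul_of_pos_left hclow hε, mul_pos ht hδ, abs_nonneg (c - 1/t)]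
    have hμρ : ((μr : ℝ) : ℂ) ∈ ρ := by
      refine hball _ (Complex.ofReal_ne_zero.mpr hμrne) ?_
      rw [Complex.norm_real, Real.norm_eq_abs]; exact hμrbound
    -- the explicit inverse
    set γ : ℂ := (c : ℂ) with hγ_def
    have hγ : γ ≠ 0 := Complex.ofReal_ne_zero.mpr hc0.ne'
    set Rm : H →L[ℂ] H := R ((μr : ℝ) : ℂ) with hRm_def
    have hμt : ((μr : ℝ) : ℂ) - (t : ℂ) = -γ⁻¹ := by
      rw [hμr_def]; push_cast; ring
    have htμ : (t : ℂ) - ((μr : ℝ) : ℂ) = γ⁻¹ := by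
      rw [hμr_def]; push_cast; ring
    have key1 : ∀ x : H, T (Rm x) = γ • (Rm x - T x) := by
      intro x
      have h := hres (t : ℂ) htρ ((μr : ℝ) : ℂ) hμρ x
      rw [hμt] at h
      have : T x - Rm x = (-γ⁻¹) • T (Rm x) := h
      calc T (Rm x) = (-γ) • ((-γ⁻¹) • T (Rm x)) := by
            rw [smul_smul, neg_mul_neg, mul_inv_cancel₀ hγ, one_smul]
        _ = (-γ) • (T x - Rm x) := by rw [← this]
        _ = γ • (Rm x - T x) := by rw [neg_smul, ← smul_neg, neg_sub]
    have key2 : ∀ x : H, Rm (T x) = γ • (Rm x - T x) := by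
      intro x
      have h := hres ((μr : ℝ) : ℂ) hμρ (t : ℂ) htρ x
      rw [htμ] at h
      have hne : Rm x - T x = γ⁻¹ • Rm (T x) := h
      calc Rm (T x) = γ • (γ⁻¹ • Rm (T x)) := by
            rw [smul_smul, mul_inv_cancel₀ hγ, one_smul]
        _ = γ • (Rm x - T x) := by rw [← hne]
    have halg : algebraMap ℝ (H →L[ℂ] H) c = γ • 1 := by
      ext x
      rw [Algebra.algebraMap_eq_smul_one]
      simp only [ContinuousLinearMap.smul_apply, ContinuousLinearMap.one_apply]
      rw [← algebraMap_smul ℂ c x]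
      norm_num [hγ_def, Complex.coe_algebraMap]
    set B : H →L[ℂ] H := γ⁻¹ • 1 + (γ⁻¹ * γ⁻¹) • Rm with hB_def
    have h1 : (γ • 1 - T) * B = 1 := by
      ext x
      simp only [ContinuousLinearMap.mul_apply, ContinuousLinearMap.sub_apply,
        ContinuousLinearMap.add_apply, ContinuousLinearMap.smul_apply,
        ContinuousLinearMap.one_apply, map_add, map_smul, hB_def]
      rw [key1 x]
      match_scalars <;> field_simp <;> ring
    have h2 : B * (γ • 1 - T) = 1 := by
      ext x
      simp only [ContinuousLinearMap.mul_apply, ContinuousLinearMap.sub_apply,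
        ContinuousLinearMap.add_apply, ContinuousLinearMap.smul_apply,
        ContinuousLinearMap.one_apply, map_add, map_smul, map_sub, hB_def]
      rw [key2 x]
      match_scalars <;> field_simp <;> ring
    rw [halg]
    exact ⟨⟨γ • 1 - T, B, h1, h2⟩, rfl⟩
  have hgap : ∀ s : ℝ, s ∈ spectrum ℝ T → s ≠ 1 / t → δ ≤ |s - 1 / t| := by
    intro s hs hne
    by_contra hlt
    push_neg at hlt
    exact (spectrum.notMem_iff.mpr (hunit s hne hlt)) hs
  -- the bump function
  set f : ℝ → ℝ := fun s => max 0 (1 - |s - 1 / t| / δ) with hf_def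
  have hfc : Continuous f := by
    apply Continuous.max continuous_const
    fun_prop
  have hf1 : f (1 / t) = 1 := by simp [hf_def]
  have hf0 : ∀ s : ℝ, δ ≤ |s - 1 / t| → f s = 0 := by
    intro s hs
    have h1 : 1 - |s - 1 / t| / δ ≤ 0 := by
      have : (1 : ℝ) ≤ |s - 1 / t| / δ := (one_le_div hδ).mpr hs
      linarith
    exact max_eq_left h1
  set σ := spectrum ℝ T with hσ_def
  set fc : C(σ, ℝ) := ContinuousMap.restrict σ ⟨f, hfc⟩ with hfc_def
  set P' : H →L[ℂ] H := cfcHom hTsa fc with hP'_def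
  -- (a) annihilation
  have hann : (T - algebraMap ℝ (H →L[ℂ] H) (1 / t)) * P' = 0 := by
    have hg0 : (ContinuousMap.restrict σ (ContinuousMap.id ℝ)
        - algebraMap ℝ C(σ, ℝ) (1 / t)) * fc = 0 := by
      ext ⟨s, hs⟩
      simp only [ContinuousMap.mul_apply, ContinuousMap.sub_apply,
        ContinuousMap.restrict_apply, ContinuousMap.id_apply, ContinuousMap.zero_apply]
      rcases eq_or_ne s (1 / t) with h | h
      · simp [h]
      · have : fc ⟨s, hs⟩ = 0 := hf0 s (hgap s hs h)
        rw [this, mul_zero]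
    have := congrArg (cfcHom hTsa) hg0
    rw [map_mul, map_sub, cfcHom_id hTsa, AlgHomClass.commutes, map_zero] at this
    exact this
  -- (b) range of P' lands in N
  have hPN : ∀ x : H, P' x ∈ N := by
    intro x
    have h := ContinuousLinearMap.ext_iff.mp hann x
    have h' : T (P' x) - (1 / t : ℝ) • P' x = 0 := by
      simpa [ContinuousLinearMap.mul_apply, ContinuousLinearMap.sub_apply,
        Algebra.algebraMap_eq_smul_one] using h
    refine (hNT _).2 ?_
    have hcoe : ((1 / t : ℝ) : ℂ) = ((t : ℂ))⁻¹ := by push_cast; ring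
    rw [sub_eq_zero] at h'
    rw [h', ← algebraMap_smul ℂ (1 / t : ℝ) (P' x), Complex.coe_algebraMap, hcoe]
  -- (c) P' is the identity on N
  have hPid : ∀ n ∈ N, P' n = n := by
    intro n hn
    rcases eq_or_ne n 0 with rfl | hn0
    · simp
    · have hTn : T n = ((t : ℂ))⁻¹ • n := (hNT n).1 hn
      have hspec : (1 / t) ∈ σ := by
        rw [hσ_def, spectrum.mem_iff]
        intro hu
        obtain ⟨u, hu'⟩ := hu
        have happ : (algebraMap ℝ (H →L[ℂ] H) (1 / t) - T) n = 0 := by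
          simp only [ContinuousLinearMap.sub_apply, Algebra.algebraMap_eq_smul_one,
            ContinuousLinearMap.smul_apply, ContinuousLinearMap.one_apply, hTn]
          rw [← algebraMap_smul ℂ (1 / t : ℝ) n, Complex.coe_algebraMap, sub_eq_zero]
          push_cast
          ring_nf
        apply hn0
        calc n = (1 : H →L[ℂ] H) n := rfl
          _ = ((↑u⁻¹ * ↑u : H →L[ℂ] H)) n := by rw [u.inv_mul]
          _ = (↑u⁻¹ : H →L[ℂ] H) ((↑u : H →L[ℂ] H) n) := rfl
          _ = 0 := by rw [hu', happ, map_zero]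
      have heig := cfcHom_apply_eigenvector hTsa hspec (x := n) ?_ fc
      · rw [hP'_def, heig]
        have hfcval : fc ⟨1 / t, hspec⟩ = 1 := hf1
        rw [hfcval]
        norm_num
      · rw [hTn]
        norm_num
  -- P' is the orthogonal projection onto N
  have hproj : (orthProj N : H →L[ℂ] H) = P' := by
    ext x
    have hmem := hPN x
    have hinner : ∀ w ∈ N, (inner ℂ (x - P' x) w : ℂ) = 0 := by
      intro w hw
      rw [inner_sub_left]
      have hsymP := (cfcHom_predicate hTsa fc).isSymmetric
      have hsw : (inner ℂ (P' x) w : ℂ) = inner ℂ x (P' w) := hsymP x w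
      rw [hsw, hPid w hw, sub_self]
    have heq := Submodule.eq_starProjection_of_mem_of_inner_eq_zero hmem hinner
    simpa [orthProj] using heq
  -- the commutator of T and A
  have hcommT : T * A - A * T = R (t : ℂ) ∘L K ∘L R (t : ℂ) := by
    ext x
    have hTx : D ⟨R (t:ℂ) x, hRdom _ x⟩ = (t : ℂ) • R (t:ℂ) x - x := by
      have h := hR1 (t : ℂ) htρ x
      linear_combination (norm := module) (-1 : ℂ) • h
    have hKc : D ⟨A (R (t:ℂ) x), hAdom ⟨R (t:ℂ) x, hRdom _ x⟩⟩
        = K (R (t:ℂ) x) + A (D ⟨R (t:ℂ) x, hRdom _ x⟩) := by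
      have h := hKcomm ⟨R (t:ℂ) x, hRdom _ x⟩
      linear_combination (norm := module) (-1 : ℂ) • h
    have h2 := hR2 (t : ℂ) htρ ⟨A (R (t:ℂ) x), hAdom ⟨R (t:ℂ) x, hRdom _ x⟩⟩
    simp only at h2
    rw [hKc, hTx] at h2
    simp only [map_add, map_sub, map_smul] at h2
    simp only [ContinuousLinearMap.sub_apply, ContinuousLinearMap.mul_apply,
      ContinuousLinearMap.comp_apply, hT_def]
    linear_combination (norm := module) h2
  have hTA : IsCompactOperator ⇑(T * A - A * T) := by
    rw [hcommT]; exact hRKR _ htρ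
  have hfin := isCompactOperator_commutator_cfcHom hTsa hTA fc
  rw [hproj]
  exact hfin
end

section
/- Let H be a Hilbert space and P an orthogonal projection with range 𝓗. Suppose f, g are bounded operators on H such that [P, f] and [P, g] are compact, and P(fg - 1)P and P(gf - 1)P are compact. Then the Toeplitz compression T_f := P f P, regarded as an operator on 𝓗, is Fredholm with parametrix T_g := P g P. -/
open Module ContinuousLinearMap

set_option linter.unusedSectionVars false
section aux
variable {E : Type*} [NormedAddCommGroup E] [InnerProductSpace ℂ E] [CompleteSpace E]

/-- A compact operator sends bounded sequences to sequences with convergent subsequences. -/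
lemma compact_subseq (k : E →L[ℂ] E) (hk : IsCompactOperator ⇑k) (x : ℕ → E)
    (hx : ∀ n, x n ∈ Metric.closedBall (0:E) 1) :
    ∃ y : E, ∃ φ : ℕ → ℕ, StrictMono φ ∧
      Filter.Tendsto (fun n => k (x (φ n))) Filter.atTop (nhds y) := by
  have hC : IsCompact (closure <| ⇑k '' Metric.closedBall 0 1) :=
    hk.isCompact_closure_image_closedBall (𝕜₁ := ℂ) 1
  have hmem : ∀ n, k (x n) ∈ closure (⇑k '' Metric.closedBall 0 1) := fun n =>
    subset_closure ⟨x n, hx n, rfl⟩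
  obtain ⟨y, _, φ, hφ, hy⟩ := hC.tendsto_subseq hmem
  exact ⟨y, φ, hφ, hy⟩

/-- Riesz-type lemma: a closed submodule on which a compact operator dominates the norm
is finite dimensional. -/
lemma findim_of_norm_le (W : Submodule ℂ E) (hWc : IsClosed (W : Set E))
    (k : E →L[ℂ] E) (hk : IsCompactOperator ⇑k) (h : ∀ u ∈ W, ‖u‖ ≤ ‖k u‖) :
    FiniteDimensional ℂ W := by
  have : CompleteSpace W := hWc.completeSpace_coe
  apply FiniteDimensional.of_isCompact_closedBall₀ ℂ (zero_lt_one (α := ℝ))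
  apply IsSeqCompact.isCompact
  intro x hx
  have hx1 : ∀ n, ((x n : E)) ∈ Metric.closedBall (0:E) 1 := by
    intro n
    have := hx n
    simpa [Metric.mem_closedBall, dist_eq_norm] using this
  obtain ⟨y, φ, hφ, hy⟩ := compact_subseq k hk (fun n => (x n : E)) hx1
  -- (k (x (φ n))) is Cauchy, so (x (φ n)) is Cauchy
  have hkc : CauchySeq fun n => k (x (φ n)) := hy.cauchySeq
  have hcauchy : CauchySeq (fun n => x (φ n)) := by
    rw [Metric.cauchySeq_iff] at hkc ⊢
    intro ε hε
    obtain ⟨N, hN⟩ := hkc ε hε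
    refine ⟨N, fun m hm n hn => ?_⟩
    have key : dist (x (φ m)) (x (φ n)) ≤ dist (k ((x (φ m) : E))) (k ((x (φ n) : E))) := by
      rw [Subtype.dist_eq, dist_eq_norm, dist_eq_norm, ← map_sub]
      exact h _ (Submodule.sub_mem W (x (φ m)).2 (x (φ n)).2)
    exact lt_of_le_of_lt key (hN m hm n hn)
  obtain ⟨l, hl⟩ := cauchySeq_tendsto_of_complete hcauchy
  refine ⟨l, ?_, φ, hφ, hl⟩
  have : ∀ n, x (φ n) ∈ Metric.closedBall (0:W) 1 := fun n => hx _
  exact Metric.isClosed_closedBall.mem_of_tendsto hl (Filter.Eventually.of_forall this)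

/-- Kernel of `1 + k` is finite dimensional for compact `k`. -/
lemma findim_ker (k : E →L[ℂ] E) (hk : IsCompactOperator ⇑k) :
    FiniteDimensional ℂ (LinearMap.ker ((1 + k : E →L[ℂ] E) : E →ₗ[ℂ] E)) := by
  apply findim_of_norm_le _ (ContinuousLinearMap.isClosed_ker _) k hk
  intro u hu
  have : u + k u = 0 := by simpa using hu
  have : k u = -u := by linear_combination (norm := abel_nf) this  -- might fail
  rw [this, norm_neg]

/-- Orthogonal complement of range of `1 + k` is finite dimensional. -/
lemma findim_range_orth (k : E →L[ℂ] E) (hk : IsCompactOperator ⇑k) :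
    FiniteDimensional ℂ ((LinearMap.range ((1 + k : E →L[ℂ] E) : E →ₗ[ℂ] E))ᗮ) := by
  apply findim_of_norm_le _ (Submodule.isClosed_orthogonal _) k hk
  intro u hu
  have h0 : inner ℂ ((1 + k : E →L[ℂ] E) u) u = (0 : ℂ) :=
    (Submodule.mem_orthogonal _ u).1 hu _ (LinearMap.mem_range_self _ u)
  have h1 : (inner ℂ u u : ℂ) = - inner ℂ (k u) u := by
    have : (inner ℂ (u + k u) u : ℂ) = 0 := by simpa using h0
    rw [inner_add_left] at this
    linear_combination this
  have h2 : ‖u‖ ^ 2 ≤ ‖k u‖ * ‖u‖ := by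
    have hcs := norm_inner_le_norm (𝕜 := ℂ) (k u) u
    have he : ‖(inner ℂ u u : ℂ)‖ = ‖u‖ ^ 2 := by
      rw [@inner_self_eq_norm_sq_to_K ℂ]
      simp [pow_two]
    rw [h1, norm_neg] at he
    linarith
  rcases eq_or_lt_of_le (norm_nonneg u) with h | h
  · rw [← h]; exact norm_nonneg _
  · nlinarith

/-- `1 + k` is bounded below on the orthogonal complement of its kernel. -/
lemma bounded_below (k : E →L[ℂ] E) (hk : IsCompactOperator ⇑k) :
    ∃ c : ℝ, 0 < c ∧ ∀ x ∈ (LinearMap.ker ((1 + k : E →L[ℂ] E) : E →ₗ[ℂ] E))ᗮ,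
      c * ‖x‖ ≤ ‖(1 + k : E →L[ℂ] E) x‖ := by
  by_contra hcon
  push_neg at hcon
  set A : E →L[ℂ] E := 1 + k with hA
  set N := LinearMap.ker (A : E →ₗ[ℂ] E)
  -- extract a normalized sequence
  have hseq : ∀ n : ℕ, ∃ u : E, u ∈ Nᗮ ∧ ‖u‖ = 1 ∧ ‖A u‖ < 1 / (n + 1) := by
    intro n
    obtain ⟨x, hxW, hx⟩ := hcon (1 / (n + 1)) (by positivity)
    have hx0 : x ≠ 0 := by
      rintro rfl
      simp at hx
    refine ⟨‖x‖⁻¹ • x, Submodule.smul_mem _ _ hxW, ?_, ?_⟩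
    · rw [norm_smul, norm_inv, norm_norm, inv_mul_cancel₀ (norm_ne_zero_iff.2 hx0)]
    · rw [A.map_smul_of_tower, norm_smul, norm_inv, norm_norm]
      calc ‖x‖⁻¹ * ‖A x‖ < ‖x‖⁻¹ * (1 / (n + 1) * ‖x‖) := by
            exact mul_lt_mul_of_pos_left hx (inv_pos.2 (norm_pos_iff.2 hx0))
        _ = 1 / (n + 1) := by
            have hxn : ‖x‖ ≠ 0 := norm_ne_zero_iff.2 hx0
            field_simp
  choose u hu1 hu2 hu3 using hseq
  have hball : ∀ n, u n ∈ Metric.closedBall (0 : E) 1 := by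
    intro n; simp [Metric.mem_closedBall, dist_eq_norm, hu2 n]
  obtain ⟨y, φ, hφ, hy⟩ := compact_subseq k hk u hball
  have hb : Filter.Tendsto (fun n : ℕ => 1 / ((φ n : ℝ) + 1)) Filter.atTop (nhds 0) := by
    apply squeeze_zero (fun n => by positivity) (fun n => ?_)
      tendsto_one_div_add_atTop_nhds_zero_nat
    apply one_div_le_one_div_of_le (by positivity)
    have := hφ.id_le n
    exact by exact_mod_cast Nat.add_le_add_right (show n ≤ φ n from this) 1
  have hAu : Filter.Tendsto (fun n => A (u (φ n))) Filter.atTop (nhds 0) := by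
    apply squeeze_zero_norm (fun n => (hu3 (φ n)).le) hb
  have huy : Filter.Tendsto (fun n => u (φ n)) Filter.atTop (nhds (-y)) := by
    have : (fun n => u (φ n)) = fun n => A (u (φ n)) - k (u (φ n)) := by
      funext n; simp [hA]
    rw [this]
    simpa using hAu.sub hy
  have hyW : -y ∈ Nᗮ :=
    (Submodule.isClosed_orthogonal N).mem_of_tendsto huy
      (Filter.Eventually.of_forall fun n => hu1 (φ n))
  have hyN : -y ∈ N := by
    have h1 : Filter.Tendsto (fun n => A (u (φ n))) Filter.atTop (nhds (A (-y))) :=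
      (A.continuous.tendsto _).comp huy
    have : A (-y) = 0 := tendsto_nhds_unique h1 hAu
    exact this
  have hy0 : -y = 0 := by
    have hmem : -y ∈ N ⊓ Nᗮ := Submodule.mem_inf.2 ⟨hyN, hyW⟩
    have hbot : N ⊓ Nᗮ = ⊥ := (Submodule.orthogonal_disjoint N).eq_bot
    rw [hbot] at hmem
    simpa using hmem
  have : ‖(-y : E)‖ = 1 := by
    have h1 : Filter.Tendsto (fun n => ‖u (φ n)‖) Filter.atTop (nhds ‖(-y : E)‖) :=
      (continuous_norm.tendsto _).comp huy
    have h2 : Filter.Tendsto (fun n => ‖u (φ n)‖) Filter.atTop (nhds 1) := by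
      have : (fun n => ‖u (φ n)‖) = fun _ => (1 : ℝ) := funext fun n => hu2 (φ n)
      rw [this]; exact tendsto_const_nhds
    exact tendsto_nhds_unique h1 h2
  rw [hy0, norm_zero] at this
  exact zero_ne_one this

/-- The range of `1 + k` is closed for compact `k`. -/
lemma range_closed (k : E →L[ℂ] E) (hk : IsCompactOperator ⇑k) :
    IsClosed ((LinearMap.range ((1 + k : E →L[ℂ] E) : E →ₗ[ℂ] E)) : Set E) := by
  set A : E →L[ℂ] E := 1 + k with hA
  set N := LinearMap.ker (A : E →ₗ[ℂ] E)
  obtain ⟨c, hc, hbdd⟩ := bounded_below k hk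
  have hNfin : FiniteDimensional ℂ N := findim_ker k hk
  have hNcomplete : CompleteSpace N := FiniteDimensional.complete ℂ N
  have hNproj : Submodule.HasOrthogonalProjection N := Submodule.HasOrthogonalProjection.ofCompleteSpace N
  set B : Nᗮ →L[ℂ] E := A ∘L (Nᗮ).subtypeL with hB
  have hBanti : AntilipschitzWith (⟨c, hc.le⟩ : NNReal)⁻¹ ⇑B := by
    apply B.antilipschitz_of_bound
    intro x
    have h := hbdd x x.2
    show ‖x‖ ≤ c⁻¹ * ‖B x‖
    rw [le_inv_mul_iff₀ hc]
    simpa [hB, hA, Submodule.coe_norm] using h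
  have hclosed : IsClosed (Set.range ⇑B) :=
    hBanti.isClosed_range B.uniformContinuous
  have : ((LinearMap.range (A : E →ₗ[ℂ] E)) : Set E) = Set.range ⇑B := by
    apply Set.Subset.antisymm
    · rintro _ ⟨x, rfl⟩
      obtain ⟨n, m, hn, hm, rfl⟩ : ∃ n m, n ∈ N ∧ m ∈ Nᗮ ∧ x = n + m := by
        have := Submodule.isCompl_orthogonal_of_hasOrthogonalProjection (K := N)
        obtain ⟨n, m, hn, hm, h⟩ := Submodule.codisjoint_iff_exists_add_eq.mp this.codisjoint x
        exact ⟨n, m, hn, hm, h.symm⟩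
      refine ⟨⟨m, hm⟩, ?_⟩
      simp only [hB, ContinuousLinearMap.comp_apply, Submodule.subtypeL_apply]
      rw [map_add, LinearMap.mem_ker.1 hn, zero_add]
      rfl
    · rintro _ ⟨x, rfl⟩
      exact ⟨x, rfl⟩
  rw [this]
  exact hclosed

/-- Cokernel of `1 + k` is finite dimensional for compact `k`. -/
lemma findim_coker (k : E →L[ℂ] E) (hk : IsCompactOperator ⇑k) :
    FiniteDimensional ℂ (E ⧸ LinearMap.range ((1 + k : E →L[ℂ] E) : E →ₗ[ℂ] E)) := by
  set A : E →L[ℂ] E := 1 + k with hA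
  set R := LinearMap.range (A : E →ₗ[ℂ] E)
  have hclosed : IsClosed (R : Set E) := range_closed k hk
  have : CompleteSpace R := hclosed.completeSpace_coe
  have hcompl : IsCompl R Rᗮ := Submodule.isCompl_orthogonal_of_hasOrthogonalProjection
  have e : (E ⧸ R) ≃ₗ[ℂ] Rᗮ := (Submodule.quotientEquivOfIsCompl R Rᗮ hcompl)
  have : FiniteDimensional ℂ Rᗮ := findim_range_orth k hk
  exact Module.Finite.equiv e.symm

lemma atkinson (T S : E →L[ℂ] E)
    (h1 : IsCompactOperator ⇑(T ∘L S - 1)) (h2 : IsCompactOperator ⇑(S ∘L T - 1)) :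
    FiniteDimensional ℂ (LinearMap.ker (T : E →ₗ[ℂ] E)) ∧ FiniteDimensional ℂ (E ⧸ LinearMap.range (T : E →ₗ[ℂ] E)) := by
  have e1 : (1 : E →L[ℂ] E) + (T ∘L S - 1) = T ∘L S := add_sub_cancel _ _
  have e2 : (1 : E →L[ℂ] E) + (S ∘L T - 1) = S ∘L T := add_sub_cancel _ _
  constructor
  · have hfin : FiniteDimensional ℂ (LinearMap.ker ((1 + (S ∘L T - 1) : E →L[ℂ] E) : E →ₗ[ℂ] E)) := findim_ker _ h2
    rw [e2] at hfin
    have hle : LinearMap.ker (T : E →ₗ[ℂ] E) ≤ LinearMap.ker ((S ∘L T : E →L[ℂ] E) : E →ₗ[ℂ] E) := by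
      intro x hx
      simp only [LinearMap.mem_ker] at hx ⊢
      simp only [ContinuousLinearMap.coe_coe] at hx
      simp [ContinuousLinearMap.comp_apply, hx]
    exact Submodule.finiteDimensional_of_le hle
  · have hfin : FiniteDimensional ℂ (E ⧸ LinearMap.range ((1 + (T ∘L S - 1) : E →L[ℂ] E) : E →ₗ[ℂ] E)) :=
      findim_coker _ h1
    rw [e1] at hfin
    have hle : LinearMap.range ((T ∘L S : E →L[ℂ] E) : E →ₗ[ℂ] E) ≤ LinearMap.range (T : E →ₗ[ℂ] E) := by
      rintro _ ⟨x, rfl⟩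
      exact ⟨S x, rfl⟩
    have hsurj : Function.Surjective
        (Submodule.mapQ (LinearMap.range ((T ∘L S : E →L[ℂ] E) : E →ₗ[ℂ] E)) (LinearMap.range (T : E →ₗ[ℂ] E)) LinearMap.id
          (fun x hx => hle hx)) := by
      intro y
      obtain ⟨x, rfl⟩ := Submodule.Quotient.mk_surjective _ y
      exact ⟨Submodule.Quotient.mk x, rfl⟩
    exact Module.Finite.of_surjective _ hsurj

end aux

section main
variable {H : Type*} [NormedAddCommGroup H] [InnerProductSpace ℂ H] [CompleteSpace H]
  (K : Submodule ℂ H) [CompleteSpace K]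

lemma key_identity (f g : H →L[ℂ] H) :
    compress K f ∘L compress K g - 1 = compress K (f ∘L g - 1) +
      K.orthogonalProjectionOnto ∘L ((f ∘L (orthProj K ∘L g - g ∘L orthProj K)) ∘L K.subtypeL) := by
  ext x
  simp only [compress, orthProj, ContinuousLinearMap.comp_apply, ContinuousLinearMap.sub_apply,
    ContinuousLinearMap.add_apply, ContinuousLinearMap.one_apply, Submodule.subtypeL_apply,
    map_sub]
  rw [Submodule.orthogonalProjectionOnto_mem_subspace_eq_self x]
  abel

lemma compact_of (f g : H →L[ℂ] H)
    (hPg : IsCompactOperator ⇑(orthProj K ∘L g - g ∘L orthProj K))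
    (hfg : IsCompactOperator ⇑(compress K (f ∘L g - 1))) :
    IsCompactOperator ⇑(compress K f ∘L compress K g - 1) := by
  rw [key_identity]
  have h2 : IsCompactOperator
      ⇑(K.orthogonalProjectionOnto ∘L ((f ∘L (orthProj K ∘L g - g ∘L orthProj K)) ∘L K.subtypeL)) := by
    have step1 : IsCompactOperator (⇑f ∘ ⇑(orthProj K ∘L g - g ∘L orthProj K)) :=
      hPg.continuous_comp f.continuous
    have step2 : IsCompactOperator
        (⇑(K.orthogonalProjectionOnto) ∘ (⇑f ∘ ⇑(orthProj K ∘L g - g ∘L orthProj K))) :=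
      step1.continuous_comp (K.orthogonalProjectionOnto).continuous
    exact step2.comp_clm (K.subtypeL)
  exact hfg.add h2
end main

/-- If `[P,f]` and `[P,g]` are compact and `P(fg−1)P`, `P(gf−1)P` are compact, then
`T_g` is a parametrix for `T_f`; in particular `T_f` is Fredholm (Atkinson). -/
theorem toeplitz_fredholm_with_parametrix
    {H : Type*} [NormedAddCommGroup H] [InnerProductSpace ℂ H] [CompleteSpace H]
    (K : Submodule ℂ H) [CompleteSpace K] (f g : H →L[ℂ] H)
    (hPf : IsCompactOperator ⇑(orthProj K ∘L f - f ∘L orthProj K))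
    (hPg : IsCompactOperator ⇑(orthProj K ∘L g - g ∘L orthProj K))
    (hfg : IsCompactOperator ⇑(compress K (f ∘L g - 1)))
    (hgf : IsCompactOperator ⇑(compress K (g ∘L f - 1))) :
    IsCompactOperator ⇑(compress K f ∘L compress K g - 1) ∧
      IsCompactOperator ⇑(compress K g ∘L compress K f - 1) ∧
      _root_.IsFredholm (compress K f) := by
    refine ⟨compact_of K f g hPg hfg, compact_of K g f hPf hgf, ?_⟩
    have h := atkinson (compress K f) (compress K g)
      (compact_of K f g hPg hfg) (compact_of K g f hPf hgf)
    exact ⟨h.1, h.2⟩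
end
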